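/- Let X = (X₁, X₂) in ℝ^{d₁+d₂} have the reparametrized multivariate Student's t density t_d(x; μ, Γ, ν) = C_d(ν) det(Γ)^{-1/2} (1 + (x-μ)ᵀΓ⁻¹(x-μ)/(ν-2))^{-(d+ν)/2} with C_d(ν) = Γ((d+ν)/2)/(√(π^d(ν-2)^d) Γ(ν/2)), ν > 2, and Γ positive definite with blocks Γ₁₁, Γ₁₂, Γ₂₂. Then t_d(x; μ, Γ, ν) = t_{d₁}(x₁; μ_{1|2}(x₂), Γ_{1|2}(x₂), ν + d₂) · t_{d₂}(x₂; μ₂, Γ₂₂, ν), where μ_{1|2}(x₂) = μ₁ + Γ₁₂Γ₂₂⁻¹(x₂ - μ₂) and Γ_{1|2}(x₂) = ((ν - 2 + (x₂-μ₂)ᵀΓ₂₂⁻¹(x₂-μ₂))/(ν - 2 + d₂)) (Γ₁₁ - Γ₁₂Γ₂₂⁻¹Γ₁₂ᵀ). -/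

import Mathlib

open Matrix Real

/-- The reparametrized multivariate Student's `t` density with mean `μ`,
covariance `Γ` and degrees of freedom `ν`. -/
noncomputable def tDens {n : Type*} [Fintype n] [DecidableEq n]
    (μ : n → ℝ) (Γ : Matrix n n ℝ) (ν : ℝ) (x : n → ℝ) : ℝ :=
  (Real.Gamma (((Fintype.card n : ℝ) + ν) / 2) /
      (Real.sqrt (π ^ (Fintype.card n) * (ν - 2) ^ (Fintype.card n)) *
        Real.Gamma (ν / 2))) *
    Γ.det ^ (-(1 : ℝ) / 2) *
    (1 + ((x - μ) ⬝ᵥ (Γ⁻¹ *ᵥ (x - μ))) / (ν - 2)) ^ (-((Fintype.card n : ℝ) + ν) / 2)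

lemma sqrt_eq_exp_aux {x : ℝ} (hx : 0 < x) : Real.sqrt x = Real.exp (Real.log x / 2) := by
  rw [← Real.log_sqrt hx.le, Real.exp_log (Real.sqrt_pos.mpr hx)]

lemma exp_div_helper (g gν x y z : ℝ) :
    g / (Real.exp x * gν) * Real.exp y * Real.exp z = g / gν * Real.exp (-x + y + z) := by
  rw [← div_div, div_eq_mul_inv g (Real.exp x), ← Real.exp_neg, Real.exp_add, Real.exp_add]
  ring

lemma gamma_exp_helper (g₁ gν g₂ a1 a2 a3 b1 b2 b3 c1 c2 c3 : ℝ) (hg₂ : g₂ ≠ 0)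
    (h : -a1 + a2 + a3 = -b1 + b2 + b3 + (-c1 + c2 + c3)) :
    g₁ / (Real.exp a1 * gν) * Real.exp a2 * Real.exp a3
      = g₁ / (Real.exp b1 * g₂) * Real.exp b2 * Real.exp b3
        * (g₂ / (Real.exp c1 * gν) * Real.exp c2 * Real.exp c3) := by
  rw [exp_div_helper, exp_div_helper, exp_div_helper, h, Real.exp_add]
  rcases eq_or_ne gν 0 with h0 | h0
  · simp [h0]
  · field_simp

lemma tDens_scalar (d₁ d₂ : ℕ) (ν q₁ q₂ dS dD : ℝ)
    (hν : 2 < ν) (hq₁ : 0 ≤ q₁) (hq₂ : 0 ≤ q₂) (hdS : 0 < dS) (hdD : 0 < dD) :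
    Real.Gamma ((↑(d₁ + d₂) + ν) / 2) /
        (Real.sqrt (π ^ (d₁ + d₂) * (ν - 2) ^ (d₁ + d₂)) * Real.Gamma (ν / 2)) *
        (dD * dS) ^ (-(1:ℝ) / 2) *
      (1 + (q₁ + q₂) / (ν - 2)) ^ (-(↑(d₁ + d₂) + ν) / 2) =
    Real.Gamma ((↑d₁ + (ν + ↑d₂)) / 2) /
          (Real.sqrt (π ^ d₁ * (ν + ↑d₂ - 2) ^ d₁) * Real.Gamma ((ν + ↑d₂) / 2)) *
          (((ν - 2 + q₂) / (ν - 2 + ↑d₂)) ^ d₁ * dS) ^ (-(1:ℝ) / 2) *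
        (1 + ((ν - 2 + q₂) / (ν - 2 + ↑d₂))⁻¹ * q₁ / (ν + ↑d₂ - 2)) ^ (-(↑d₁ + (ν + ↑d₂)) / 2) *
      (Real.Gamma ((↑d₂ + ν) / 2) / (Real.sqrt (π ^ d₂ * (ν - 2) ^ d₂) * Real.Gamma (ν / 2)) *
          dD ^ (-(1:ℝ) / 2) *
        (1 + q₂ / (ν - 2)) ^ (-(↑d₂ + ν) / 2)) := by
  have ha : (0:ℝ) < ν - 2 := by linarith
  have hd₂ : (0:ℝ) ≤ d₂ := Nat.cast_nonneg d₂
  have hd₁ : (0:ℝ) ≤ d₁ := Nat.cast_nonneg d₁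
  have hB : (0:ℝ) < ν - 2 + d₂ := by linarith
  have hb : (0:ℝ) < ν + d₂ - 2 := by linarith
  have he : (0:ℝ) < ν - 2 + q₂ := by linarith
  have hf : (0:ℝ) < ν - 2 + (q₁ + q₂) := by linarith
  have hc : (0:ℝ) < (ν - 2 + q₂) / (ν - 2 + ↑d₂) := div_pos he hB
  have hπ : (0:ℝ) < π := Real.pi_pos
  -- unify Gamma arguments
  have hG1 : Real.Gamma ((↑d₁ + (ν + ↑d₂)) / 2) = Real.Gamma ((↑(d₁ + d₂) + ν) / 2) := by
    congr 1; push_cast; ring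
  have hG2 : Real.Gamma ((↑d₂ + ν) / 2) = Real.Gamma ((ν + ↑d₂) / 2) := by
    congr 1; ring
  rw [hG1, hG2]
  -- rewrite the inner bases as quotients
  have h1 : 1 + (q₁ + q₂) / (ν - 2) = (ν - 2 + (q₁ + q₂)) / (ν - 2) := by
    field_simp
  have h2 : 1 + ((ν - 2 + q₂) / (ν - 2 + ↑d₂))⁻¹ * q₁ / (ν + ↑d₂ - 2)
      = (ν - 2 + (q₁ + q₂)) / (ν - 2 + q₂) := by
    rw [inv_div]
    field_simp
    ring
  have h3 : 1 + q₂ / (ν - 2) = (ν - 2 + q₂) / (ν - 2) := by field_simp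
  rw [h1, h2, h3]
  -- convert everything to exponentials
  rw [Real.rpow_def_of_pos (div_pos hf ha), Real.rpow_def_of_pos (div_pos hf he),
    Real.rpow_def_of_pos (div_pos he ha),
    Real.rpow_def_of_pos (mul_pos hdD hdS), Real.rpow_def_of_pos hdD,
    Real.rpow_def_of_pos (mul_pos (pow_pos hc d₁) hdS),
    sqrt_eq_exp_aux (mul_pos (pow_pos hπ _) (pow_pos ha _)),
    sqrt_eq_exp_aux (mul_pos (pow_pos hπ _) (pow_pos hb _)),
    sqrt_eq_exp_aux (mul_pos (pow_pos hπ _) (pow_pos ha _)),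
    Real.log_div hf.ne' ha.ne', Real.log_div hf.ne' he.ne', Real.log_div he.ne' ha.ne',
    Real.log_mul hdD.ne' hdS.ne',
    Real.log_mul (pow_pos hc d₁).ne' hdS.ne',
    Real.log_mul (pow_pos hπ d₁).ne' (pow_pos hb d₁).ne',
    Real.log_mul (pow_pos hπ d₂).ne' (pow_pos ha d₂).ne',
    Real.log_mul (pow_pos hπ (d₁+d₂)).ne' (pow_pos ha (d₁+d₂)).ne',
    Real.log_pow, Real.log_pow, Real.log_pow, Real.log_pow, Real.log_pow, Real.log_pow,
    Real.log_pow,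
    Real.log_div he.ne' hB.ne']
  have hbB : Real.log (ν + ↑d₂ - 2) = Real.log (ν - 2 + ↑d₂) := by congr 1; ring
  rw [hbB]
  have hGν : Real.Gamma (ν / 2) ≠ 0 := (Real.Gamma_pos_of_pos (by linarith)).ne'
  have hGν' : Real.Gamma ((ν + ↑d₂) / 2) ≠ 0 :=
    (Real.Gamma_pos_of_pos (by positivity)).ne'
  have hG1' : Real.Gamma ((↑(d₁ + d₂) + ν) / 2) ≠ 0 :=
    (Real.Gamma_pos_of_pos (by positivity)).ne'
  refine gamma_exp_helper _ _ _ _ _ _ _ _ _ _ _ _ hGν' ?_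
  push_cast
  ring

/-- Factorization of the joint mean–covariance parametrized Student's `t` density
into the conditional density of the first block given the second block (with
`ν + d₂` degrees of freedom and scaled Schur complement covariance) times the
marginal density of the second block. -/
theorem tDens_factorization (d₁ d₂ : ℕ) (ν : ℝ) (hν : 2 < ν)
    (μ₁ : Fin d₁ → ℝ) (μ₂ : Fin d₂ → ℝ)
    (Γ₁₁ : Matrix (Fin d₁) (Fin d₁) ℝ) (Γ₁₂ : Matrix (Fin d₁) (Fin d₂) ℝ)
    (Γ₂₂ : Matrix (Fin d₂) (Fin d₂) ℝ)
    (hΓ : (Matrix.fromBlocks Γ₁₁ Γ₁₂ Γ₁₂ᵀ Γ₂₂).PosDef) :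
    ∀ (x₁ : Fin d₁ → ℝ) (x₂ : Fin d₂ → ℝ),
      tDens (Sum.elim μ₁ μ₂) (Matrix.fromBlocks Γ₁₁ Γ₁₂ Γ₁₂ᵀ Γ₂₂) ν
          (Sum.elim x₁ x₂) =
        tDens (μ₁ + (Γ₁₂ * Γ₂₂⁻¹) *ᵥ (x₂ - μ₂))
            (((ν - 2 + (x₂ - μ₂) ⬝ᵥ (Γ₂₂⁻¹ *ᵥ (x₂ - μ₂))) / (ν - 2 + d₂)) •
              (Γ₁₁ - Γ₁₂ * Γ₂₂⁻¹ * Γ₁₂ᵀ))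
            (ν + d₂) x₁ *
          tDens μ₂ Γ₂₂ ν x₂ := by
  intro x₁ x₂
  have hT : Γ₁₂ᵀ = Γ₁₂ᴴ := (Matrix.conjTranspose_eq_transpose_of_trivial _).symm
  have hΓ' : (Matrix.fromBlocks Γ₁₁ Γ₁₂ Γ₁₂ᴴ Γ₂₂).PosDef := by rwa [hT] at hΓ
  have hD : Γ₂₂.PosDef := by
    refine Matrix.PosDef.of_dotProduct_mulVec_pos ?_ ?_
    · have h := hΓ.1
      rw [Matrix.IsHermitian, Matrix.fromBlocks_conjTranspose] at h
      have h2 := congrArg Matrix.toBlocks₂₂ h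
      simpa [Matrix.toBlocks_fromBlocks₂₂, Matrix.IsSymm] using h2
    · intro y hy
      have hne : Sum.elim (0 : Fin d₁ → ℝ) y ≠ 0 := by
        intro h; exact hy (funext fun i => congrFun h (Sum.inr i))
      have h := hΓ.dotProduct_mulVec_pos hne
      simpa [Matrix.fromBlocks_mulVec, sumElim_dotProduct_sumElim] using h
  haveI : Invertible Γ₂₂ := hD.isUnit.invertible
  set S : Matrix (Fin d₁) (Fin d₁) ℝ := Γ₁₁ - Γ₁₂ * Γ₂₂⁻¹ * Γ₁₂ᵀ with hSdef
  have hSherm : S.IsHermitian := by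
    have := (Matrix.IsHermitian.fromBlocks₂₂ Γ₁₁ Γ₁₂ hD.1).mp (hT ▸ hΓ.1)
    rwa [← hT] at this
  have hS : S.PosDef := by
    refine Matrix.PosDef.of_dotProduct_mulVec_pos hSherm fun x hx => ?_
    have hne : Sum.elim x (-((Γ₂₂⁻¹ * Γ₁₂ᴴ) *ᵥ x)) ≠ 0 := by
      intro h; exact hx (funext fun i => congrFun h (Sum.inl i))
    have h := hΓ'.dotProduct_mulVec_pos hne
    rw [Matrix.dotProduct_mulVec, Matrix.schur_complement_eq₂₂ Γ₁₁ Γ₁₂ _ _ hD.1] at h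
    simp only [neg_add_cancel, add_neg_cancel] at h
    rw [Matrix.dotProduct_mulVec]
    simpa [← hT] using h
  have hSd : IsUnit S.det := hS.det_pos.ne'.isUnit
  have hDd : IsUnit Γ₂₂.det := hD.det_pos.ne'.isUnit
  have hΓd : IsUnit (Matrix.fromBlocks Γ₁₁ Γ₁₂ Γ₁₂ᵀ Γ₂₂).det := hΓ.det_pos.ne'.isUnit
  have hdet : (Matrix.fromBlocks Γ₁₁ Γ₁₂ Γ₁₂ᵀ Γ₂₂).det = Γ₂₂.det * S.det := by
    rw [Matrix.det_fromBlocks₂₂, Matrix.invOf_eq_nonsing_inv]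
  set v₁ : Fin d₁ → ℝ := x₁ - μ₁ with hv₁
  set v₂ : Fin d₂ → ℝ := x₂ - μ₂ with hv₂
  set u : Fin d₁ → ℝ := v₁ - (Γ₁₂ * Γ₂₂⁻¹) *ᵥ v₂ with hudef
  set w₁ : Fin d₁ → ℝ := S⁻¹ *ᵥ u with hw₁
  set w₂ : Fin d₂ → ℝ := Γ₂₂⁻¹ *ᵥ v₂ - (Γ₂₂⁻¹ * Γ₁₂ᵀ) *ᵥ w₁ with hw₂
  clear_value v₁ v₂ u w₁ w₂
  have hSu : S *ᵥ w₁ = u := by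
    rw [hw₁, Matrix.mulVec_mulVec, Matrix.mul_nonsing_inv _ hSd, Matrix.one_mulVec]
  have hmul : (Matrix.fromBlocks Γ₁₁ Γ₁₂ Γ₁₂ᵀ Γ₂₂) *ᵥ (Sum.elim w₁ w₂) = Sum.elim v₁ v₂ := by
    rw [Matrix.fromBlocks_mulVec]
    simp only [Sum.elim_comp_inl, Sum.elim_comp_inr]
    have htop : Γ₁₁ *ᵥ w₁ + Γ₁₂ *ᵥ w₂ = v₁ := by
      have h1 : Γ₁₁ *ᵥ w₁ - (Γ₁₂ * Γ₂₂⁻¹ * Γ₁₂ᵀ) *ᵥ w₁ = u := by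
        rw [← Matrix.sub_mulVec]; exact hSu
      rw [hw₂, Matrix.mulVec_sub, Matrix.mulVec_mulVec, Matrix.mulVec_mulVec, ← Matrix.mul_assoc]
      have h2 : v₁ = u + (Γ₁₂ * Γ₂₂⁻¹) *ᵥ v₂ := by rw [hudef]; abel
      rw [h2, ← h1]; abel
    have hbot : Γ₁₂ᵀ *ᵥ w₁ + Γ₂₂ *ᵥ w₂ = v₂ := by
      rw [hw₂, Matrix.mulVec_sub, Matrix.mulVec_mulVec, Matrix.mulVec_mulVec,
        ← Matrix.mul_assoc, Matrix.mul_nonsing_inv _ hDd, Matrix.one_mulVec,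
        Matrix.one_mul]
      abel
    rw [htop, hbot]
  have hinv : (Matrix.fromBlocks Γ₁₁ Γ₁₂ Γ₁₂ᵀ Γ₂₂)⁻¹ *ᵥ (Sum.elim v₁ v₂)
      = Sum.elim w₁ w₂ := by
    rw [← hmul, Matrix.mulVec_mulVec, Matrix.nonsing_inv_mul _ hΓd, Matrix.one_mulVec]
  have hDT : Γ₂₂ᵀ = Γ₂₂ := by
    rw [← Matrix.conjTranspose_eq_transpose_of_trivial]; exact hD.1
  have key : v₂ ⬝ᵥ ((Γ₂₂⁻¹ * Γ₁₂ᵀ) *ᵥ w₁) = ((Γ₁₂ * Γ₂₂⁻¹) *ᵥ v₂) ⬝ᵥ w₁ := by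
    rw [Matrix.dotProduct_mulVec, ← Matrix.mulVec_transpose, Matrix.transpose_mul,
      Matrix.transpose_transpose, Matrix.transpose_nonsing_inv, hDT]
  set q₁ : ℝ := u ⬝ᵥ (S⁻¹ *ᵥ u) with hq₁def
  set q₂ : ℝ := v₂ ⬝ᵥ (Γ₂₂⁻¹ *ᵥ v₂) with hq₂def
  have hq : (Sum.elim v₁ v₂) ⬝ᵥ ((Matrix.fromBlocks Γ₁₁ Γ₁₂ Γ₁₂ᵀ Γ₂₂)⁻¹ *ᵥ Sum.elim v₁ v₂)
      = q₁ + q₂ := by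
    rw [hinv, sumElim_dotProduct_sumElim, hw₂, dotProduct_sub, key,
      hq₁def, hq₂def, ← hw₁, hudef, sub_dotProduct]
    ring
  have hq₁ : 0 ≤ q₁ := by
    simpa [hq₁def] using hS.posSemidef.inv.dotProduct_mulVec_nonneg u
  have hq₂ : 0 ≤ q₂ := by
    simpa [hq₂def] using hD.posSemidef.inv.dotProduct_mulVec_nonneg v₂
  -- the scale
  set c : ℝ := (ν - 2 + q₂) / (ν - 2 + d₂) with hcdef
  have hb : (0:ℝ) < ν - 2 + d₂ := by
    have : (0:ℝ) ≤ d₂ := Nat.cast_nonneg d₂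
    linarith
  have ha : (0:ℝ) < ν - 2 := by linarith
  have hc : 0 < c := div_pos (by linarith) hb
  haveI : Invertible c := invertibleOfNonzero hc.ne'
  have hcS : (c • S)⁻¹ = c⁻¹ • S⁻¹ := by
    refine Matrix.inv_eq_right_inv ?_
    rw [Matrix.smul_mul, Matrix.mul_smul, Matrix.mul_nonsing_inv _ hSd, smul_smul,
      mul_inv_cancel₀ hc.ne', one_smul]
  have hdet2 : (c • S).det = c ^ d₁ * S.det := by
    rw [Matrix.det_smul, Fintype.card_fin]
  have hsum : Sum.elim x₁ x₂ - Sum.elim μ₁ μ₂ = Sum.elim v₁ v₂ := by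
    funext i; cases i <;> simp [hv₁, hv₂]
  have hu' : x₁ - (μ₁ + (Γ₁₂ * Γ₂₂⁻¹) *ᵥ v₂) = u := by rw [hudef, hv₁]; abel
  simp only [tDens, Fintype.card_sum, Fintype.card_fin]
  rw [hsum, hq, hu', hdet, hdet2, hcS, Matrix.smul_mulVec, dotProduct_smul,
    smul_eq_mul, ← hv₂, ← hq₁def, ← hq₂def, hcdef]
  exact tDens_scalar d₁ d₂ ν q₁ q₂ S.det Γ₂₂.det hν hq₁ hq₂ hS.det_pos hD.det_pos
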